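/- For each prime p, if the embeddings (A_{λ,μ} ⊆ B), for (λ,μ) ∈ {0,…,p−1}², are pairwise nonisomorphic as subgroup embeddings, then the groups G(A_{λ,μ} ⊆ B) form a family of at least p² pairwise nonisomorphic metabelian groups of order p^{41}. -/

import Mathlib

namespace Metabelian

variable {B : Type*} [AddCommGroup B]

/-- The subgroup `A` of `B` is bounded by `n`, i.e. `n • a = 0` for all `a ∈ A`. -/
class BoundedSub (A : AddSubgroup B) (n : ℕ) : Prop where
  bound : ∀ a : A, n • (a : B) = 0

lemma val_smul_eq {n : ℕ} (a : B) (h : n • a = 0) (x : ℕ) : (x % n) • a = x • a := by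
  conv_rhs => rw [← Nat.mod_add_div x n]
  rw [add_nsmul, mul_nsmul, h, smul_zero, add_zero]

/-- Birkhoff's construction `G(A ⊆ B) = (A ⊕ B) ⋊_ψ D` with `D = ℤ/n` where `n` bounds `A`:
the underlying set is `A × B × ℤ/n` and the (multiplicatively written) group operation is
`(a,b,d)·(a',b',d') = (a+a', b + d·ι(a') + b', d+d')`. -/
instance mgroup (A : AddSubgroup B) (n : ℕ) [NeZero n] [BoundedSub A n] :
    Group (A × B × ZMod n) where
  mul x y := (x.1 + y.1, x.2.1 + x.2.2.val • (y.1 : B) + y.2.1, x.2.2 + y.2.2)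
  one := (0, 0, 0)
  inv x := (-x.1, -x.2.1 + x.2.2.val • (x.1 : B), -x.2.2)
  mul_assoc x y z := by
    have hb := BoundedSub.bound (A := A) (n := n)
    refine Prod.ext (add_assoc _ _ _) (Prod.ext ?_ (add_assoc _ _ _))
    show x.2.1 + x.2.2.val • (y.1 : B) + y.2.1 + (x.2.2 + y.2.2).val • (z.1 : B) + z.2.1
        = x.2.1 + x.2.2.val • ((y.1 + z.1 : A) : B) + (y.2.1 + y.2.2.val • (z.1 : B) + z.2.1)
    rw [ZMod.val_add, val_smul_eq _ (hb z.1), AddSubgroup.coe_add, smul_add, add_nsmul]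
    abel
  one_mul x := by
    refine Prod.ext (zero_add _) (Prod.ext ?_ (zero_add _))
    show (0 : B) + (0 : ZMod n).val • (x.1 : B) + x.2.1 = x.2.1
    simp
  mul_one x := by
    refine Prod.ext (add_zero _) (Prod.ext ?_ (add_zero _))
    show x.2.1 + x.2.2.val • ((0 : A) : B) + 0 = x.2.1
    simp
  inv_mul_cancel x := by
    have hb := BoundedSub.bound (A := A) (n := n)
    refine Prod.ext (neg_add_cancel _) (Prod.ext ?_ (neg_add_cancel _))
    show -x.2.1 + x.2.2.val • (x.1 : B) + (-x.2.2).val • (x.1 : B) + x.2.1 = 0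
    have h2 : ((-x.2.2).val + x.2.2.val) % n = 0 := by
      rw [← ZMod.val_add, neg_add_cancel, ZMod.val_zero]
    have h3 : x.2.2.val • (x.1 : B) + (-x.2.2).val • (x.1 : B) = 0 := by
      rw [add_comm, ← add_nsmul, ← val_smul_eq _ (hb x.1), h2, zero_nsmul]
    rw [add_assoc, add_assoc, ← add_assoc (x.2.2.val • (x.1 : B)), h3, zero_add, neg_add_cancel]

/-! The two-parameter example: `B = ℤ/p⁷ ⊕ ℤ/p⁶ ⊕ ℤ/p⁴ ⊕ ℤ/p⁴ ⊕ ℤ/p² ⊕ ℤ/p²` with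
generators `x₁, x₂, y₁, y₂, z₁, z₂` and
`A_{λ,μ} = ⟨p³x₁+py₁+py₂+z₂, p²x₂+pλy₁+p(μ+1)y₂+λz₁+μz₂, p²y₁+pz₁, p²y₂+pz₂⟩`. -/

abbrev Bd (p : ℕ) :=
  ZMod (p ^ 7) × ZMod (p ^ 6) × ZMod (p ^ 4) × ZMod (p ^ 4) × ZMod (p ^ 2) × ZMod (p ^ 2)

def x1gen (p : ℕ) : Bd p := (1, 0, 0, 0, 0, 0)
def x2gen (p : ℕ) : Bd p := (0, 1, 0, 0, 0, 0)
def y1gen (p : ℕ) : Bd p := (0, 0, 1, 0, 0, 0)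
def y2gen (p : ℕ) : Bd p := (0, 0, 0, 1, 0, 0)
def z1gen (p : ℕ) : Bd p := (0, 0, 0, 0, 1, 0)
def z2gen (p : ℕ) : Bd p := (0, 0, 0, 0, 0, 1)

/-- `u₁ = p³x₁ + py₁ + py₂ + z₂`. -/
def u1gen (p : ℕ) : Bd p := p ^ 3 • x1gen p + p • y1gen p + p • y2gen p + z2gen p

/-- `u₂ = p²x₂ + pλy₁ + p(μ+1)y₂ + λz₁ + μz₂`. -/
def u2gen (p l mu : ℕ) : Bd p :=
  p ^ 2 • x2gen p + (p * l) • y1gen p + (p * (mu + 1)) • y2gen p + l • z1gen p + mu • z2gen p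

/-- `v₁ = p²y₁ + pz₁`. -/
def v1gen (p : ℕ) : Bd p := p ^ 2 • y1gen p + p • z1gen p

/-- `v₂ = p²y₂ + pz₂`. -/
def v2gen (p : ℕ) : Bd p := p ^ 2 • y2gen p + p • z2gen p

/-- `A_{λ,μ}`. -/
def A2sub (p l mu : ℕ) : AddSubgroup (Bd p) :=
  AddSubgroup.closure {u1gen p, u2gen p l mu, v1gen p, v2gen p}

section
set_option linter.unusedSectionVars false
variable (p : ℕ) [Fact p.Prime]

lemma smul_x1 (k : ℕ) (h : p ^ 7 ∣ k) : k • x1gen p = 0 := by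
  simp [x1gen, Prod.smul_mk, nsmul_eq_mul, (ZMod.natCast_eq_zero_iff _ _).mpr h,
    Prod.ext_iff]
lemma smul_x2 (k : ℕ) (h : p ^ 6 ∣ k) : k • x2gen p = 0 := by
  simp [x2gen, Prod.smul_mk, nsmul_eq_mul, (ZMod.natCast_eq_zero_iff _ _).mpr h,
    Prod.ext_iff]
lemma smul_y1 (k : ℕ) (h : p ^ 4 ∣ k) : k • y1gen p = 0 := by
  simp [y1gen, Prod.smul_mk, nsmul_eq_mul, (ZMod.natCast_eq_zero_iff _ _).mpr h,
    Prod.ext_iff]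
lemma smul_y2 (k : ℕ) (h : p ^ 4 ∣ k) : k • y2gen p = 0 := by
  simp [y2gen, Prod.smul_mk, nsmul_eq_mul, (ZMod.natCast_eq_zero_iff _ _).mpr h,
    Prod.ext_iff]
lemma smul_z1 (k : ℕ) (h : p ^ 2 ∣ k) : k • z1gen p = 0 := by
  simp [z1gen, Prod.smul_mk, nsmul_eq_mul, (ZMod.natCast_eq_zero_iff _ _).mpr h,
    Prod.ext_iff]
lemma smul_z2 (k : ℕ) (h : p ^ 2 ∣ k) : k • z2gen p = 0 := by
  simp [z2gen, Prod.smul_mk, nsmul_eq_mul, (ZMod.natCast_eq_zero_iff _ _).mpr h,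
    Prod.ext_iff]

instance A2sub_bounded (l mu : ℕ) : BoundedSub (A2sub p l mu) (p ^ 4) := by
  constructor
  rintro ⟨a, ha⟩
  simp only
  induction ha using AddSubgroup.closure_induction with
  | mem b hb =>
    simp only [Set.mem_insert_iff, Set.mem_singleton_iff] at hb
    rcases hb with rfl | rfl | rfl | rfl
    · rw [u1gen, smul_add, smul_add, smul_add, smul_smul, smul_smul, smul_smul,
        smul_x1 p _ (by rw [← pow_add]), smul_y1 p _ ⟨p, by ring⟩, smul_y2 p _ ⟨p, by ring⟩,
        smul_z2 p _ ⟨p ^ 2, by ring⟩]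
      simp
    · rw [u2gen, smul_add, smul_add, smul_add, smul_add, smul_smul, smul_smul, smul_smul,
        smul_smul, smul_smul, smul_x2 p _ ⟨1, by ring⟩, smul_y1 p _ ⟨p * l, by ring⟩,
        smul_y2 p _ ⟨p * (mu + 1), by ring⟩, smul_z1 p _ ⟨p ^ 2 * l, by ring⟩,
        smul_z2 p _ ⟨p ^ 2 * mu, by ring⟩]
      simp
    · rw [v1gen, smul_add, smul_smul, smul_smul, smul_y1 p _ ⟨p ^ 2, by ring⟩,
        smul_z1 p _ ⟨p ^ 3, by ring⟩]
      simp
    · rw [v2gen, smul_add, smul_smul, smul_smul, smul_y2 p _ ⟨p ^ 2, by ring⟩,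
        smul_z2 p _ ⟨p ^ 3, by ring⟩]
      simp
  | zero => simp
  | add x y hx hy hx' hy' => simp [smul_add, hx', hy']
  | neg x hx hx' => simp [hx']

end



section Generic

variable {B : Type*} [AddCommGroup B] (A : AddSubgroup B) (n : ℕ) [NeZero n] [BoundedSub A n]

lemma mg_mul (x y : A × B × ZMod n) :
    x * y = (x.1 + y.1, x.2.1 + x.2.2.val • (y.1 : B) + y.2.1, x.2.2 + y.2.2) := rfl

lemma mg_inv (x : A × B × ZMod n) :
    x⁻¹ = (-x.1, -x.2.1 + x.2.2.val • (x.1 : B), -x.2.2) := rfl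

lemma mg_mem_center (z : A × B × ZMod n) (h1 : z.1 = 0) (h3 : z.2.2 = 0) :
    z ∈ Subgroup.center (A × B × ZMod n) := by
  rw [Subgroup.mem_center_iff]
  intro g
  rw [mg_mul, mg_mul, h1, h3]
  simp [Prod.ext_iff, add_comm]

lemma mg_center_eq (hn : 1 < n) (a₀ : A) (ha : ∀ k : ℕ, k < n → k • (a₀ : B) = 0 → k = 0)
    (z : A × B × ZMod n) (hz : z ∈ Subgroup.center (A × B × ZMod n)) :
    z.1 = 0 ∧ z.2.2 = 0 := by
  haveI : Fact (1 < n) := ⟨hn⟩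
  rw [Subgroup.mem_center_iff] at hz
  have h1 := hz ((0 : A), (0 : B), (1 : ZMod n))
  have h2 := hz (a₀, (0 : B), (0 : ZMod n))
  rw [mg_mul, mg_mul] at h1
  rw [mg_mul, mg_mul] at h2
  simp only [Prod.mk.injEq, ZMod.val_one, ZMod.val_zero, one_smul, zero_smul,
    ZeroMemClass.coe_zero, smul_zero, zero_add, add_zero] at h1 h2
  constructor
  · have hz1 : (z.1 : B) = 0 := by
      have h' : (z.1 : B) + z.2.1 = z.2.1 := h1.2.1
      exact add_eq_right.mp h'
    exact (ZeroMemClass.coe_eq_zero).mp hz1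
  · have hz3 : z.2.2.val • (a₀ : B) = 0 := by
      have h' : z.2.1 = z.2.1 + z.2.2.val • (a₀ : B) := h2.2.1
      exact left_eq_add.mp h'
    have := ha z.2.2.val (ZMod.val_lt _) hz3
    exact (ZMod.val_eq_zero _).mp this

/-- Projection of `G(A ⊆ B)` onto the abelian group `A × (B ⧸ A) × ZMod n`. -/
def mgProj : (A × B × ZMod n) →* Multiplicative (A × (B ⧸ A) × ZMod n) where
  toFun z := Multiplicative.ofAdd (z.1, QuotientAddGroup.mk z.2.1, z.2.2)
  map_one' := rfl
  map_mul' x y := by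
    have hA : ((x.2.2.val • (y.1 : B) : B) : B ⧸ A) = 0 := by
      rw [QuotientAddGroup.eq_zero_iff]
      exact AddSubgroup.nsmul_mem A y.1.2 _
    rw [mg_mul]
    refine congrArg Multiplicative.ofAdd (Prod.ext rfl (Prod.ext ?_ rfl))
    show ((x.2.1 + x.2.2.val • (y.1 : B) + y.2.1 : B) : B ⧸ A) =
      QuotientAddGroup.mk x.2.1 + QuotientAddGroup.mk y.2.1
    rw [QuotientAddGroup.mk_add, QuotientAddGroup.mk_add, hA, add_zero]

lemma mg_commutator_le (z : A × B × ZMod n) (hz : z ∈ commutator (A × B × ZMod n)) :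
    z.1 = 0 ∧ z.2.2 = 0 ∧ z.2.1 ∈ A := by
  have h := Abelianization.commutator_subset_ker (mgProj A n) hz
  rw [MonoidHom.mem_ker] at h
  have h' : (z.1, (QuotientAddGroup.mk z.2.1 : B ⧸ A), z.2.2) = 0 := h
  rw [Prod.ext_iff, Prod.ext_iff] at h'
  obtain ⟨h1, h2, h3⟩ := h'
  exact ⟨h1, h3, (QuotientAddGroup.eq_zero_iff _).mp h2⟩

lemma mg_mem_commutator (hn : 1 < n) {b : B} (hb : b ∈ A) :
    ((0 : A), b, (0 : ZMod n)) ∈ commutator (A × B × ZMod n) := by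
  haveI : Fact (1 < n) := ⟨hn⟩
  letI : Bracket (A × B × ZMod n) (A × B × ZMod n) := commutatorElement
  have key : ⁅((⟨-b, neg_mem hb⟩ : A), (0 : B), (0 : ZMod n)),
      ((0 : A), (0 : B), (1 : ZMod n))⁆ = ((0 : A), b, (0 : ZMod n)) := by
    rw [commutatorElement_def, mg_inv, mg_inv, mg_mul, mg_mul, mg_mul]
    refine Prod.ext ?_ (Prod.ext ?_ ?_) <;>
      simp [ZMod.val_one, ZMod.val_zero, Prod.ext_iff]
  rw [commutator_def]
  exact key ▸ Subgroup.commutator_mem_commutator (Subgroup.mem_top _) (Subgroup.mem_top _)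

lemma mulequiv_center {G H : Type*} [Group G] [Group H] (φ : G ≃* H) {z : G}
    (hz : z ∈ Subgroup.center G) : φ z ∈ Subgroup.center H := by
  rw [Subgroup.mem_center_iff] at hz ⊢
  intro g
  rw [← φ.apply_symm_apply g, ← map_mul, hz, map_mul]

lemma mulequiv_commutator {G H : Type*} [Group G] [Group H] (φ : G ≃* H) {z : G}
    (hz : z ∈ commutator G) : φ z ∈ commutator H := by
  rw [commutator_def] at hz ⊢
  have h : φ z ∈ Subgroup.map φ.toMonoidHom ⁅(⊤ : Subgroup G), ⊤⁆ :=
    Subgroup.mem_map_of_mem _ hz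
  rw [Subgroup.map_commutator] at h
  exact Subgroup.commutator_mono le_top le_top h

end Generic

section Orders
set_option linter.unusedSectionVars false

variable (p : ℕ) [Fact p.Prime]

lemma p_pos : 0 < p := (Fact.out : p.Prime).pos

lemma one_lt_p4 : 1 < p ^ 4 :=
  Nat.one_lt_pow (by norm_num) (Fact.out : p.Prime).one_lt

lemma u1_mem (l mu : ℕ) : u1gen p ∈ A2sub p l mu :=
  AddSubgroup.subset_closure (Set.mem_insert _ _)

lemma u2_mem (l mu : ℕ) : u2gen p l mu ∈ A2sub p l mu :=
  AddSubgroup.subset_closure (by simp)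

lemma v1_mem (l mu : ℕ) : v1gen p ∈ A2sub p l mu :=
  AddSubgroup.subset_closure (by simp)

lemma v2_mem (l mu : ℕ) : v2gen p ∈ A2sub p l mu :=
  AddSubgroup.subset_closure (by simp)

lemma u1_ord : (p ^ 4) • u1gen p = 0 :=
  BoundedSub.bound (A := A2sub p 0 0) (n := p ^ 4) ⟨u1gen p, u1_mem p 0 0⟩

lemma u2_ord (l mu : ℕ) : (p ^ 4) • u2gen p l mu = 0 :=
  BoundedSub.bound (A := A2sub p l mu) (n := p ^ 4) ⟨u2gen p l mu, u2_mem p l mu⟩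

lemma v1_ord : (p ^ 2) • v1gen p = 0 := by
  rw [v1gen, smul_add, smul_smul, smul_smul, smul_y1 p _ ⟨1, by ring⟩,
    smul_z1 p _ ⟨p, by ring⟩, add_zero]

lemma v2_ord : (p ^ 2) • v2gen p = 0 := by
  rw [v2gen, smul_add, smul_smul, smul_smul, smul_y2 p _ ⟨1, by ring⟩,
    smul_z2 p _ ⟨p, by ring⟩, add_zero]

lemma combo_eq (l mu a b c d : ℕ) :
    a • u1gen p + b • u2gen p l mu + c • v1gen p + d • v2gen p =
      (((a * p ^ 3 : ℕ) : ZMod (p ^ 7)), ((b * p ^ 2 : ℕ) : ZMod (p ^ 6)),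
       ((a * p + b * (p * l) + c * p ^ 2 : ℕ) : ZMod (p ^ 4)),
       ((a * p + b * (p * (mu + 1)) + d * p ^ 2 : ℕ) : ZMod (p ^ 4)),
       ((b * l + c * p : ℕ) : ZMod (p ^ 2)),
       ((a + b * mu + d * p : ℕ) : ZMod (p ^ 2))) := by
  simp only [u1gen, u2gen, v1gen, v2gen, x1gen, x2gen, y1gen, y2gen, z1gen, z2gen,
    Prod.smul_mk, Prod.mk_add_mk, smul_zero, add_zero, zero_add, smul_smul,
    Prod.mk.injEq, nsmul_eq_mul]
  refine ⟨?_, ?_, ?_, ?_, ?_, ?_⟩ <;> push_cast <;> ring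

lemma u1_ann (k : ℕ) (hk : k < p ^ 4) (h : k • u1gen p = 0) : k = 0 := by
  have hc := combo_eq p 0 0 k 0 0 0
  simp only [zero_nsmul, add_zero, Nat.zero_mul, Nat.mul_zero, Nat.add_zero] at hc
  rw [hc] at h
  have h1 : ((k * p ^ 3 : ℕ) : ZMod (p ^ 7)) = 0 := congrArg Prod.fst h
  rw [ZMod.natCast_eq_zero_iff] at h1
  have hlt : k * p ^ 3 < p ^ 7 := by
    calc k * p ^ 3 < p ^ 4 * p ^ 3 := by
          exact (Nat.mul_lt_mul_right (Nat.pow_pos (p_pos p))).mpr hk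
      _ = p ^ 7 := by ring
  have hp3 : 0 < p ^ 3 := Nat.pow_pos (p_pos p)
  have := Nat.eq_zero_of_dvd_of_lt h1 hlt
  rcases Nat.mul_eq_zero.mp this with h' | h'
  · exact h'
  · omega

/-- The natural parametrization of `A_{λ,μ}`. -/
def genHom (l mu : ℕ) : (ZMod (p ^ 4) × ZMod (p ^ 4) × ZMod (p ^ 2) × ZMod (p ^ 2)) →+ Bd p :=
  AddMonoidHom.mk'
    (fun w => w.1.val • u1gen p + w.2.1.val • u2gen p l mu +
      w.2.2.1.val • v1gen p + w.2.2.2.val • v2gen p)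
    (by
      intro x y
      simp only [Prod.fst_add, Prod.snd_add, ZMod.val_add]
      rw [val_smul_eq _ (u1_ord p), val_smul_eq _ (u2_ord p l mu),
        val_smul_eq _ (v1_ord p), val_smul_eq _ (v2_ord p)]
      simp only [add_nsmul]
      abel)

lemma genHom_apply (l mu : ℕ) (w : ZMod (p ^ 4) × ZMod (p ^ 4) × ZMod (p ^ 2) × ZMod (p ^ 2)) :
    genHom p l mu w = w.1.val • u1gen p + w.2.1.val • u2gen p l mu +
      w.2.2.1.val • v1gen p + w.2.2.2.val • v2gen p := rfl

lemma genHom_inj (l mu : ℕ) : Function.Injective (genHom p l mu) := by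
  rw [injective_iff_map_eq_zero]
  intro w hw
  rw [genHom_apply, combo_eq] at hw
  rw [show (0 : Bd p) = ((0 : ZMod (p ^ 7)), (0 : ZMod (p ^ 6)), (0 : ZMod (p ^ 4)),
      (0 : ZMod (p ^ 4)), (0 : ZMod (p ^ 2)), (0 : ZMod (p ^ 2))) from rfl,
    Prod.mk.injEq, Prod.mk.injEq, Prod.mk.injEq, Prod.mk.injEq, Prod.mk.injEq] at hw
  obtain ⟨h1, h2, h3, h4, -, -⟩ := hw
  have hp3 : 0 < p ^ 3 := Nat.pow_pos (p_pos p)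
  have hp2 : 0 < p ^ 2 := Nat.pow_pos (p_pos p)
  have ha : w.1.val = 0 := by
    rw [ZMod.natCast_eq_zero_iff] at h1
    have hlt : w.1.val * p ^ 3 < p ^ 7 := by
      calc w.1.val * p ^ 3 < p ^ 4 * p ^ 3 := (Nat.mul_lt_mul_right hp3).mpr (ZMod.val_lt _)
        _ = p ^ 7 := by ring
    rcases Nat.mul_eq_zero.mp (Nat.eq_zero_of_dvd_of_lt h1 hlt) with h' | h'
    · exact h'
    · omega
  have hb : w.2.1.val = 0 := by
    rw [ZMod.natCast_eq_zero_iff] at h2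
    have hlt : w.2.1.val * p ^ 2 < p ^ 6 := by
      calc w.2.1.val * p ^ 2 < p ^ 4 * p ^ 2 := (Nat.mul_lt_mul_right hp2).mpr (ZMod.val_lt _)
        _ = p ^ 6 := by ring
    rcases Nat.mul_eq_zero.mp (Nat.eq_zero_of_dvd_of_lt h2 hlt) with h' | h'
    · exact h'
    · omega
  have hc : w.2.2.1.val = 0 := by
    rw [ha, hb] at h3
    simp only [zero_mul, zero_add] at h3
    rw [ZMod.natCast_eq_zero_iff] at h3
    have hlt : w.2.2.1.val * p ^ 2 < p ^ 4 := by
      calc w.2.2.1.val * p ^ 2 < p ^ 2 * p ^ 2 := (Nat.mul_lt_mul_right hp2).mpr (ZMod.val_lt _)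
        _ = p ^ 4 := by ring
    rcases Nat.mul_eq_zero.mp (Nat.eq_zero_of_dvd_of_lt h3 hlt) with h' | h'
    · exact h'
    · omega
  have hd : w.2.2.2.val = 0 := by
    rw [ha, hb] at h4
    simp only [zero_mul, zero_add] at h4
    rw [ZMod.natCast_eq_zero_iff] at h4
    have hlt : w.2.2.2.val * p ^ 2 < p ^ 4 := by
      calc w.2.2.2.val * p ^ 2 < p ^ 2 * p ^ 2 := (Nat.mul_lt_mul_right hp2).mpr (ZMod.val_lt _)
        _ = p ^ 4 := by ring
    rcases Nat.mul_eq_zero.mp (Nat.eq_zero_of_dvd_of_lt h4 hlt) with h' | h'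
    · exact h'
    · omega
  exact Prod.ext ((ZMod.val_eq_zero _).mp ha) (Prod.ext ((ZMod.val_eq_zero _).mp hb)
    (Prod.ext ((ZMod.val_eq_zero _).mp hc) ((ZMod.val_eq_zero _).mp hd)))

lemma genHom_range (l mu : ℕ) : (genHom p l mu).range = A2sub p l mu := by
  haveI : Fact (1 < p ^ 4) := ⟨one_lt_p4 p⟩
  haveI : Fact (1 < p ^ 2) := ⟨Nat.one_lt_pow (by norm_num) (Fact.out : p.Prime).one_lt⟩
  apply le_antisymm
  · rintro _ ⟨w, rfl⟩
    rw [genHom_apply]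
    exact add_mem (add_mem (add_mem (AddSubgroup.nsmul_mem _ (u1_mem p l mu) _)
      (AddSubgroup.nsmul_mem _ (u2_mem p l mu) _)) (AddSubgroup.nsmul_mem _ (v1_mem p l mu) _))
      (AddSubgroup.nsmul_mem _ (v2_mem p l mu) _)
  · rw [A2sub, AddSubgroup.closure_le]
    rintro g hg
    simp only [Set.mem_insert_iff, Set.mem_singleton_iff] at hg
    rcases hg with rfl | rfl | rfl | rfl
    · exact ⟨(1, 0, 0, 0), by simp [genHom_apply, ZMod.val_one]⟩
    · exact ⟨(0, 1, 0, 0), by simp [genHom_apply, ZMod.val_one]⟩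
    · exact ⟨(0, 0, 1, 0), by simp [genHom_apply, ZMod.val_one]⟩
    · exact ⟨(0, 0, 0, 1), by simp [genHom_apply, ZMod.val_one]⟩

lemma card_A2sub (l mu : ℕ) : Nat.card (A2sub p l mu) = p ^ 12 := by
  have h1 : Nat.card (genHom p l mu).range =
      Nat.card (ZMod (p ^ 4) × ZMod (p ^ 4) × ZMod (p ^ 2) × ZMod (p ^ 2)) :=
    (Nat.card_congr (AddMonoidHom.ofInjective (genHom_inj p l mu)).toEquiv).symm
  rw [genHom_range] at h1
  rw [h1]
  simp only [Nat.card_prod, Nat.card_zmod]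
  ring

end Orders

set_option maxHeartbeats 1000000 in
set_option synthInstance.maxHeartbeats 400000 in
/-- If the embeddings `(A_{λ,μ} ⊆ B)`, `(λ,μ) ∈ {0,…,p-1}²`, are pairwise nonisomorphic as
subgroup embeddings, then the groups `G(A_{λ,μ} ⊆ B)` form a family of `p²` pairwise
nonisomorphic metabelian groups of order `p⁴¹`. -/
theorem two_parameter_family (p : ℕ) [Fact p.Prime]
    (hemb : ∀ l mu l' mu' : ℕ, l < p → mu < p → l' < p → mu' < p →
      (∃ f : Bd p ≃+ Bd p, (A2sub p l mu).map f.toAddMonoidHom = A2sub p l' mu') →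
      l = l' ∧ mu = mu') :
    (∀ l mu l' mu' : ℕ, l < p → mu < p → l' < p → mu' < p →
      Nonempty ((A2sub p l mu × Bd p × ZMod (p ^ 4)) ≃*
        (A2sub p l' mu' × Bd p × ZMod (p ^ 4))) → l = l' ∧ mu = mu') ∧
    (∀ l mu : ℕ, l < p → mu < p →
      Nat.card (A2sub p l mu × Bd p × ZMod (p ^ 4)) = p ^ 41 ∧
      commutator (A2sub p l mu × Bd p × ZMod (p ^ 4)) ≤
        Subgroup.center (A2sub p l mu × Bd p × ZMod (p ^ 4))) := by
  have hn : 1 < p ^ 4 := one_lt_p4 p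
  constructor
  · intro l mu l' mu' hl hmu hl' hmu' ⟨φ⟩
    apply hemb l mu l' mu' hl hmu hl' hmu'
    -- abbreviations
    have hcent : ∀ b : Bd p,
        φ ((0 : A2sub p l mu), b, (0 : ZMod (p ^ 4))) =
          ((0 : A2sub p l' mu'), (φ ((0 : A2sub p l mu), b, (0 : ZMod (p ^ 4)))).2.1,
            (0 : ZMod (p ^ 4))) := by
      intro b
      have hz := mulequiv_center φ (mg_mem_center (A2sub p l mu) (p ^ 4)
        ((0 : A2sub p l mu), b, (0 : ZMod (p ^ 4))) rfl rfl)
      have h := mg_center_eq (A2sub p l' mu') (p ^ 4) hn ⟨u1gen p, u1_mem p l' mu'⟩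
        (fun k hk h0 => u1_ann p k hk h0) _ hz
      exact Prod.ext h.1 (Prod.ext rfl h.2)
    have hcent' : ∀ b : Bd p,
        φ.symm ((0 : A2sub p l' mu'), b, (0 : ZMod (p ^ 4))) =
          ((0 : A2sub p l mu), (φ.symm ((0 : A2sub p l' mu'), b, (0 : ZMod (p ^ 4)))).2.1,
            (0 : ZMod (p ^ 4))) := by
      intro b
      have hz := mulequiv_center φ.symm (mg_mem_center (A2sub p l' mu') (p ^ 4)
        ((0 : A2sub p l' mu'), b, (0 : ZMod (p ^ 4))) rfl rfl)
      have h := mg_center_eq (A2sub p l mu) (p ^ 4) hn ⟨u1gen p, u1_mem p l mu⟩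
        (fun k hk h0 => u1_ann p k hk h0) _ hz
      exact Prod.ext h.1 (Prod.ext rfl h.2)
    let f : Bd p ≃+ Bd p :=
      { toFun := fun b => (φ ((0 : A2sub p l mu), b, (0 : ZMod (p ^ 4)))).2.1
        invFun := fun b => (φ.symm ((0 : A2sub p l' mu'), b, (0 : ZMod (p ^ 4)))).2.1
        left_inv := by
          intro b
          show (φ.symm ((0 : A2sub p l' mu'),
            (φ ((0 : A2sub p l mu), b, (0 : ZMod (p ^ 4)))).2.1, (0 : ZMod (p ^ 4)))).2.1 = b
          rw [← hcent b, φ.symm_apply_apply]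
        right_inv := by
          intro b
          show (φ ((0 : A2sub p l mu),
            (φ.symm ((0 : A2sub p l' mu'), b, (0 : ZMod (p ^ 4)))).2.1,
            (0 : ZMod (p ^ 4)))).2.1 = b
          rw [← hcent' b, φ.apply_symm_apply]
        map_add' := by
          intro b b'
          have hmul : ((0 : A2sub p l mu), b, (0 : ZMod (p ^ 4))) *
              ((0 : A2sub p l mu), b', (0 : ZMod (p ^ 4))) =
              ((0 : A2sub p l mu), b + b', (0 : ZMod (p ^ 4))) := by
            rw [mg_mul]
            simp
          show (φ ((0 : A2sub p l mu), b + b', (0 : ZMod (p ^ 4)))).2.1 = _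
          rw [← hmul, MulEquiv.map_mul, hcent b, hcent b', mg_mul]
          simp }
    refine ⟨f, ?_⟩
    have fdef : ∀ b : Bd p,
        f b = (φ ((0 : A2sub p l mu), b, (0 : ZMod (p ^ 4)))).2.1 := fun _ => rfl
    ext b'
    constructor
    · rintro ⟨b, hb, rfl⟩
      have h1 := mg_mem_commutator (A2sub p l mu) (p ^ 4) hn hb
      have h2 := mulequiv_commutator φ h1
      rw [hcent b] at h2
      have h3 := (mg_commutator_le (A2sub p l' mu') (p ^ 4) _ h2).2.2
      simpa [fdef] using h3
    · intro hb'
      have h1 := mg_mem_commutator (A2sub p l' mu') (p ^ 4) hn hb'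
      have h2 := mulequiv_commutator φ.symm h1
      rw [hcent' b'] at h2
      have h3 := (mg_commutator_le (A2sub p l mu) (p ^ 4) _ h2).2.2
      refine ⟨(φ.symm ((0 : A2sub p l' mu'), b', (0 : ZMod (p ^ 4)))).2.1, by simpa using h3, ?_⟩
      show f _ = b'
      rw [fdef, ← hcent' b', φ.apply_symm_apply]
  · intro l mu hl hmu
    constructor
    · rw [Nat.card_prod, Nat.card_prod, card_A2sub p l mu]
      simp only [Nat.card_zmod]
      have : Nat.card (Bd p) = p ^ 25 := by
        simp only [Bd, Nat.card_prod, Nat.card_zmod]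
        ring
      rw [this]
      ring
    · intro z hz
      obtain ⟨h1, h3, -⟩ := mg_commutator_le (A2sub p l mu) (p ^ 4) z hz
      exact mg_mem_center (A2sub p l mu) (p ^ 4) z h1 h3
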